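/- Let $D=(\delta_1+\tau_1,\delta_2+\tau_2)$ be a derivation on $\mathcal{A}\ltimes\mathcal{U}$. Then $\mathfrak{S}(\tau_2)$ is an $\mathcal{A}$-sub-bimodule of $\mathcal{U}$, and if $\tau_1$ is continuous then $\mathfrak{S}(\tau_2)$ is an ideal in $\mathcal{U}$. -/

import Mathlib

open Filter Topology

/-- Compatible Banach `A`-bimodule structure on the Banach algebra `U`,
giving rise to the semidirect product `A ⋉ U`. -/
structure SDP (A : Type*) (U : Type*) [NonUnitalNormedRing A] [NonUnitalNormedRing U] where
  l : A → U → U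
  r : U → A → U
  l_add₁ : ∀ (a b : A) (x : U), l (a + b) x = l a x + l b x
  l_add₂ : ∀ (a : A) (x y : U), l a (x + y) = l a x + l a y
  r_add₁ : ∀ (x y : U) (a : A), r (x + y) a = r x a + r y a
  r_add₂ : ∀ (x : U) (a b : A), r x (a + b) = r x a + r x b
  l_mul : ∀ (a b : A) (x : U), l (a * b) x = l a (l b x)
  r_mul : ∀ (x : U) (a b : A), r x (a * b) = r (r x a) b
  l_r : ∀ (a : A) (x : U) (b : A), r (l a x) b = l a (r x b)
  compat₁ : ∀ (a : A) (x y : U), (l a x) * y = l a (x * y)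
  compat₂ : ∀ (x y : U) (a : A), r (x * y) a = x * (r y a)
  compat₃ : ∀ (x : U) (a : A) (y : U), (r x a) * y = x * (l a y)
  norm_l : ∀ (a : A) (x : U), ‖l a x‖ ≤ ‖a‖ * ‖x‖
  norm_r : ∀ (x : U) (a : A), ‖r x a‖ ≤ ‖x‖ * ‖a‖

variable {A U : Type*} [NonUnitalNormedRing A] [NonUnitalNormedRing U]

/-- The semidirect product multiplication on `A × U`. -/
def SDP.mul (S : SDP A U) (p q : A × U) : A × U :=
  (p.1 * q.1, S.l p.1 q.2 + S.r p.2 q.1 + p.2 * q.2)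

/-- `D` is a derivation on the semidirect product `A ⋉ U`. -/
def SDP.IsDer (S : SDP A U) (D : A × U → A × U) : Prop :=
  ∀ p q : A × U, D (S.mul p q) = S.mul p (D q) + S.mul (D p) q

/-- The map on `A × U` assembled from components `δ₁, δ₂, τ₁, τ₂`. -/
def derComp (δ₁ : A → A) (δ₂ : A → U) (τ₁ : U → A) (τ₂ : U → U) : A × U → A × U :=
  fun p => (δ₁ p.1 + τ₁ p.2, δ₂ p.1 + τ₂ p.2)

/-- The annihilator `ann_A U`. -/
def SDP.ann (S : SDP A U) : Set A := {a | (∀ x, S.l a x = 0) ∧ (∀ x, S.r x a = 0)}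

/-- The separating space of a linear map between Banach spaces. -/
def sepSpace {X Y : Type*} [NormedAddCommGroup X] [NormedAddCommGroup Y] (T : X → Y) : Set Y :=
  {y | ∃ u : ℕ → X, Tendsto u atTop (nhds 0) ∧ Tendsto (fun n => T (u n)) atTop (nhds y)}

section Helpers

lemma SDP.l_zero₂ (S : SDP A U) (a : A) : S.l a 0 = 0 := by
  have h := S.l_add₂ a 0 0
  rw [add_zero] at h
  exact (left_eq_add.mp h)

lemma SDP.l_zero₁ (S : SDP A U) (x : U) : S.l 0 x = 0 := by
  have h := S.l_add₁ 0 0 x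
  rw [add_zero] at h
  exact (left_eq_add.mp h)

lemma SDP.r_zero₁ (S : SDP A U) (a : A) : S.r 0 a = 0 := by
  have h := S.r_add₁ 0 0 a
  rw [add_zero] at h
  exact (left_eq_add.mp h)

lemma SDP.r_zero₂ (S : SDP A U) (x : U) : S.r x 0 = 0 := by
  have h := S.r_add₂ x 0 0
  rw [add_zero] at h
  exact (left_eq_add.mp h)

lemma SDP.l_sub₂ (S : SDP A U) (a : A) (x y : U) :
    S.l a (x - y) = S.l a x - S.l a y :=
  map_sub (AddMonoidHom.mk' (S.l a) (S.l_add₂ a)) x y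

lemma SDP.r_sub₁ (S : SDP A U) (x y : U) (a : A) :
    S.r (x - y) a = S.r x a - S.r y a :=
  map_sub (AddMonoidHom.mk' (fun z => S.r z a) (fun z w => S.r_add₁ z w a)) x y

lemma SDP.r_sub₂ (S : SDP A U) (x : U) (a b : A) :
    S.r x (a - b) = S.r x a - S.r x b :=
  map_sub (AddMonoidHom.mk' (S.r x) (S.r_add₂ x)) a b

lemma SDP.tendsto_l (S : SDP A U) (a : A) {u : ℕ → U} {x : U}
    (h : Filter.Tendsto u Filter.atTop (nhds x)) :
    Filter.Tendsto (fun n => S.l a (u n)) Filter.atTop (nhds (S.l a x)) := by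
  rw [tendsto_iff_norm_sub_tendsto_zero] at h ⊢
  have hb : ∀ n, ‖S.l a (u n) - S.l a x‖ ≤ ‖a‖ * ‖u n - x‖ := fun n => by
    rw [← S.l_sub₂]; exact S.norm_l a _
  have := h.const_mul ‖a‖
  rw [mul_zero] at this
  exact squeeze_zero (fun n => norm_nonneg _) hb this

lemma SDP.tendsto_r (S : SDP A U) {u : ℕ → U} {x : U} (a : A)
    (h : Filter.Tendsto u Filter.atTop (nhds x)) :
    Filter.Tendsto (fun n => S.r (u n) a) Filter.atTop (nhds (S.r x a)) := by
  rw [tendsto_iff_norm_sub_tendsto_zero] at h ⊢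
  have hb : ∀ n, ‖S.r (u n) a - S.r x a‖ ≤ ‖u n - x‖ * ‖a‖ := fun n => by
    rw [← S.r_sub₁]; exact S.norm_r _ a
  have := h.mul_const ‖a‖
  rw [zero_mul] at this
  exact squeeze_zero (fun n => norm_nonneg _) hb this

lemma SDP.tendsto_r' (S : SDP A U) {v : ℕ → A} {b : A} (x : U)
    (h : Filter.Tendsto v Filter.atTop (nhds b)) :
    Filter.Tendsto (fun n => S.r x (v n)) Filter.atTop (nhds (S.r x b)) := by
  rw [tendsto_iff_norm_sub_tendsto_zero] at h ⊢
  have hb : ∀ n, ‖S.r x (v n) - S.r x b‖ ≤ ‖x‖ * ‖v n - b‖ := fun n => by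
    rw [← S.r_sub₂]; exact S.norm_r x _
  have := h.const_mul ‖x‖
  rw [mul_zero] at this
  exact squeeze_zero (fun n => norm_nonneg _) hb this

end Helpers
lemma SDP.l_sub₁ (S : SDP A U) (a b : A) (x : U) :
    S.l (a - b) x = S.l a x - S.l b x :=
  map_sub (AddMonoidHom.mk' (fun c => S.l c x) (fun c d => S.l_add₁ c d x)) a b

lemma SDP.tendsto_l' (S : SDP A U) {v : ℕ → A} {b : A} (x : U)
    (h : Filter.Tendsto v Filter.atTop (nhds b)) :
    Filter.Tendsto (fun n => S.l (v n) x) Filter.atTop (nhds (S.l b x)) := by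
  rw [tendsto_iff_norm_sub_tendsto_zero] at h ⊢
  have hb : ∀ n, ‖S.l (v n) x - S.l b x‖ ≤ ‖v n - b‖ * ‖x‖ := fun n => by
    rw [← S.l_sub₁]; exact S.norm_l _ x
  have := h.mul_const ‖x‖
  rw [zero_mul] at this
  exact squeeze_zero (fun n => norm_nonneg _) hb this
/-- For a derivation `D = (δ₁ + τ₁, δ₂ + τ₂)` on `A ⋉ U`, the separating space
`𝔖(τ₂)` is an `A`-sub-bimodule of `U`, and if `τ₁` is continuous then `𝔖(τ₂)` is a
two-sided ideal of `U`. -/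
theorem stmt_12 [NormedSpace ℂ A] [NormedSpace ℂ U] (S : SDP A U)
    (δ₁ : A → A) (δ₂ : A → U) (τ₁ : U → A) (τ₂ : U → U)
    (hδ₁ : IsLinearMap ℂ δ₁) (hδ₂ : IsLinearMap ℂ δ₂)
    (hτ₁ : IsLinearMap ℂ τ₁) (hτ₂ : IsLinearMap ℂ τ₂)
    (hD : S.IsDer (derComp δ₁ δ₂ τ₁ τ₂)) :
    ((0 : U) ∈ sepSpace τ₂) ∧
    (∀ x y : U, x ∈ sepSpace τ₂ → y ∈ sepSpace τ₂ → x + y ∈ sepSpace τ₂) ∧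
    (∀ x ∈ sepSpace τ₂, ∀ a : A, S.l a x ∈ sepSpace τ₂ ∧ S.r x a ∈ sepSpace τ₂) ∧
    (Continuous τ₁ →
      ∀ x ∈ sepSpace τ₂, ∀ y : U, y * x ∈ sepSpace τ₂ ∧ x * y ∈ sepSpace τ₂) := by

  have key₁ : ∀ a x, τ₂ (S.l a x) = S.l a (τ₂ x) + (S.l (δ₁ a) x + δ₂ a * x) := by
    intro a x
    have h := hD (a, 0) (0, x)
    simp only [SDP.mul, derComp, Prod.mk_add_mk, Prod.mk.injEq, mul_zero, zero_mul,
      S.l_zero₁, S.l_zero₂, S.r_zero₁, S.r_zero₂, hδ₂.map_zero, hτ₂.map_zero,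
      hδ₁.map_zero, hτ₁.map_zero, zero_add, add_zero] at h
    exact h.2
  have key₂ : ∀ x a, τ₂ (S.r x a) = (S.r x (δ₁ a) + x * δ₂ a) + S.r (τ₂ x) a := by
    intro x a
    have h := hD (0, x) (a, 0)
    simp only [SDP.mul, derComp, Prod.mk_add_mk, Prod.mk.injEq, mul_zero, zero_mul,
      S.l_zero₁, S.l_zero₂, S.r_zero₁, S.r_zero₂, hδ₂.map_zero, hτ₂.map_zero,
      hδ₁.map_zero, hτ₁.map_zero, zero_add, add_zero] at h
    exact h.2
  have key₃ : ∀ x y, τ₂ (x * y) = (S.r x (τ₁ y) + x * τ₂ y) + (S.l (τ₁ x) y + τ₂ x * y) := by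
    intro x y
    have h := hD (0, x) (0, y)
    simp only [SDP.mul, derComp, Prod.mk_add_mk, Prod.mk.injEq, mul_zero, zero_mul,
      S.l_zero₁, S.l_zero₂, S.r_zero₁, S.r_zero₂, hδ₂.map_zero, hτ₂.map_zero,
      hδ₁.map_zero, hτ₁.map_zero, zero_add, add_zero] at h
    exact h.2
  refine ⟨⟨fun _ => 0, tendsto_const_nhds, by simp [hτ₂.map_zero]⟩,
    ?_, ?_, ?_⟩
  · rintro x y ⟨u, hu0, hux⟩ ⟨v, hv0, hvy⟩
    refine ⟨fun n => u n + v n, by simpa using hu0.add hv0, ?_⟩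
    exact (hux.add hvy).congr (fun n => (hτ₂.map_add _ _).symm)
  · rintro x ⟨u, hu0, hux⟩ a
    constructor
    · refine ⟨fun n => S.l a (u n), by simpa [S.l_zero₂] using S.tendsto_l a hu0, ?_⟩
      have h1 := (S.tendsto_l a hux).add
        ((S.tendsto_l (δ₁ a) hu0).add ((tendsto_const_nhds (x := δ₂ a)).mul hu0))
      have h2 := h1.congr (fun n => (key₁ a (u n)).symm)
      simpa [S.l_zero₂, mul_zero, add_zero] using h2
    · refine ⟨fun n => S.r (u n) a, by simpa [S.r_zero₁] using S.tendsto_r a hu0, ?_⟩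
      have h1 := ((S.tendsto_r (δ₁ a) hu0).add (hu0.mul (tendsto_const_nhds (x := δ₂ a)))).add
        (S.tendsto_r a hux)
      have h2 := h1.congr (fun n => (key₂ (u n) a).symm)
      simpa [S.r_zero₁, zero_mul, add_zero, zero_add] using h2
  · rintro hc x ⟨u, hu0, hux⟩ y
    have hτu : Filter.Tendsto (fun n => τ₁ (u n)) Filter.atTop (nhds 0) := by
      simpa [hτ₁.map_zero, Function.comp_def] using (hc.tendsto 0).comp hu0
    constructor
    · -- y * x
      refine ⟨fun n => y * u n, by simpa using (tendsto_const_nhds (x := y)).mul hu0, ?_⟩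
      have h1 := ((S.tendsto_r' y hτu).add ((tendsto_const_nhds (x := y)).mul hux)).add
        ((S.tendsto_l (τ₁ y) hu0).add ((tendsto_const_nhds (x := τ₂ y)).mul hu0))
      have h2 := h1.congr (fun n => (key₃ y (u n)).symm)
      simpa [S.r_zero₂, S.l_zero₂, zero_add, add_zero] using h2
    · -- x * y
      refine ⟨fun n => u n * y, by simpa using hu0.mul (tendsto_const_nhds (x := y)), ?_⟩
      have h1 := ((S.tendsto_r (τ₁ y) hu0).add (hu0.mul (tendsto_const_nhds (x := τ₂ y)))).add
        ((S.tendsto_l' y hτu).add (hux.mul (tendsto_const_nhds (x := y))))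
      have h2 := h1.congr (fun n => (key₃ (u n) y).symm)
      simpa [S.r_zero₁, S.l_zero₁, zero_mul, zero_add, add_zero] using h2
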